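/- Let w be a 2D-weight, let p ≥ 0 be a real number, and let F : Γ → ℂ. Then ∑_{σ ∈ Γ} λ_σ^{-2(p+1)}·θ_w(σ)²·|F(σ)|² ≤ 4·α_w²·∑_{σ ∈ Γ} λ_σ^{-2p}·|F(σ)|² (an inequality of sums valued in [0,∞]). Consequently, if Φ is a generalized functional with Fock transform F and ‖Φ‖_{-p} < ∞, then the 2D-GWN operator satisfies ‖K_w Φ‖_{-(p+1)} ≤ 2·α_w·‖Φ‖_{-p}. -/
import Mathlib


noncomputable def lam (σ : Finset ℕ) : ℝ := ∏ k ∈ σ, ((k : ℝ) + 1)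

noncomputable def theta (w : ℕ → ℕ → ℝ) (σ : Finset ℕ) : ℝ :=
  (∑ j ∈ σ, w j j) + ∑ k ∈ σ, ∑' j : ℕ, (if j ∈ σ then 0 else w j k)

lemma lam_pos (σ : Finset ℕ) : 0 < lam σ := by
  unfold lam
  exact Finset.prod_pos fun k _ => by positivity

lemma one_le_lam (σ : Finset ℕ) : 1 ≤ lam σ := by
  unfold lam
  have := Finset.prod_le_prod (s := σ) (f := fun _ : ℕ => (1:ℝ)) (g := fun k : ℕ => (k:ℝ)+1)
    (fun i _ => zero_le_one) (fun i _ => le_add_of_nonneg_left (Nat.cast_nonneg i))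
  simpa using this

lemma card_le_lam (σ : Finset ℕ) : (σ.card : ℝ) ≤ lam σ := by
  rcases σ.eq_empty_or_nonempty with h | h
  · simp [h, lam]
  · set m := σ.max' h with hm
    have hsub : σ ⊆ Finset.range (m + 1) := fun x hx =>
      Finset.mem_range.mpr (Nat.lt_succ_of_le (σ.le_max' x hx))
    have hcard : σ.card ≤ m + 1 := by
      simpa using Finset.card_le_card hsub
    have hmem : m ∈ σ := σ.max'_mem h
    have hfac : ((m:ℝ) + 1) ≤ lam σ := by
      have hrw : ((m:ℝ)+1) * lam (σ.erase m) = lam σ :=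
        Finset.mul_prod_erase σ (fun k : ℕ => (k:ℝ)+1) hmem
      have h1 : (1:ℝ) ≤ lam (σ.erase m) := one_le_lam _
      nlinarith [(Nat.cast_nonneg m : (0:ℝ) ≤ m)]
    calc (σ.card : ℝ) ≤ (m : ℝ) + 1 := by exact_mod_cast hcard
      _ ≤ lam σ := hfac

theorem stmt4 (w : ℕ → ℕ → ℝ) (hw0 : ∀ j k, 0 ≤ w j k)
    (hwsum : ∀ k, Summable fun j => w j k)
    (hwbdd : BddAbove (Set.range fun k => ∑' j, w j k))
    (α : ℝ) (hα : α = ⨆ k, ∑' j, w j k)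
    (p : ℝ) (hp : 0 ≤ p) (F : Finset ℕ → ℂ) :
    (∑' σ : Finset ℕ, ENNReal.ofReal (lam σ ^ (-(2*(p+1))) * (theta w σ)^2 * ‖F σ‖^2))
      ≤ ENNReal.ofReal (4 * α^2) *
        ∑' σ : Finset ℕ, ENNReal.ofReal (lam σ ^ (-(2*p)) * ‖F σ‖^2) ∧
    (Summable (fun σ : Finset ℕ => lam σ ^ (-(2*p)) * ‖F σ‖^2) →
      Summable (fun σ : Finset ℕ => lam σ ^ (-(2*(p+1))) * (theta w σ)^2 * ‖F σ‖^2) ∧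
      Real.sqrt (∑' σ : Finset ℕ, lam σ ^ (-(2*(p+1))) * (theta w σ)^2 * ‖F σ‖^2)
        ≤ 2 * α * Real.sqrt (∑' σ : Finset ℕ, lam σ ^ (-(2*p)) * ‖F σ‖^2)) := by
  -- each column sum is ≤ α
  have htsum_le : ∀ k, (∑' j, w j k) ≤ α := by
    intro k
    rw [hα]
    exact le_ciSup hwbdd k
  have hα0 : 0 ≤ α := by
    rw [hα]
    exact Real.iSup_nonneg fun k => tsum_nonneg fun j => hw0 j k
  -- theta bound
  have htheta_nonneg : ∀ σ, 0 ≤ theta w σ := by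
    intro σ
    unfold theta
    have h1 : 0 ≤ ∑ j ∈ σ, w j j := Finset.sum_nonneg fun j _ => hw0 j j
    have h2 : 0 ≤ ∑ k ∈ σ, ∑' j : ℕ, (if j ∈ σ then 0 else w j k) :=
      Finset.sum_nonneg fun k _ => tsum_nonneg fun j => by
        split <;> [exact le_refl 0; exact hw0 _ _]
    linarith
  have htheta_le : ∀ σ, theta w σ ≤ 2 * α * lam σ := by
    intro σ
    have h1 : (∑ j ∈ σ, w j j) ≤ σ.card * α := by
      calc (∑ j ∈ σ, w j j) ≤ ∑ j ∈ σ, α := by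
            refine Finset.sum_le_sum fun j _ => ?_
            calc w j j ≤ ∑' i, w i j := Summable.le_tsum (hwsum j) j (fun i _ => hw0 i j)
              _ ≤ α := htsum_le j
        _ = σ.card * α := by simp [mul_comm]
    have h2 : (∑ k ∈ σ, ∑' j : ℕ, (if j ∈ σ then 0 else w j k)) ≤ σ.card * α := by
      calc (∑ k ∈ σ, ∑' j : ℕ, (if j ∈ σ then 0 else w j k)) ≤ ∑ k ∈ σ, α := by
            refine Finset.sum_le_sum fun k _ => ?_
            have hs : Summable fun j : ℕ => (if j ∈ σ then 0 else w j k) := by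
              refine Summable.of_nonneg_of_le (fun j => ?_) (fun j => ?_) (hwsum k)
              · split <;> [exact le_refl 0; exact hw0 _ _]
              · split <;> [exact hw0 _ _; exact le_refl _]
            calc (∑' j : ℕ, (if j ∈ σ then 0 else w j k)) ≤ ∑' j, w j k := by
                  refine Summable.tsum_le_tsum (fun j => ?_) hs (hwsum k)
                  split <;> [exact hw0 _ _; exact le_refl _]
              _ ≤ α := htsum_le k
        _ = σ.card * α := by simp [mul_comm]
    have hcl := card_le_lam σ
    have : theta w σ ≤ 2 * (σ.card : ℝ) * α := by
      unfold theta; linarith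
    calc theta w σ ≤ 2 * (σ.card : ℝ) * α := this
      _ ≤ 2 * α * lam σ := by nlinarith
  -- key pointwise estimate
  have key : ∀ σ : Finset ℕ,
      lam σ ^ (-(2*(p+1))) * (theta w σ)^2 * ‖F σ‖^2
        ≤ 4 * α^2 * (lam σ ^ (-(2*p)) * ‖F σ‖^2) := by
    intro σ
    set L := lam σ with hLdef
    have hL : 0 < L := lam_pos σ
    have hsplit : L ^ (-(2*(p+1))) = L ^ (-(2*p)) * L ^ (-2:ℝ) := by
      rw [← Real.rpow_add hL]; ring_nf
    have hinv : L ^ (-2:ℝ) * L ^ 2 = 1 := by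
      rw [← Real.rpow_natCast L 2, ← Real.rpow_add hL]
      norm_num
    have hθ2 : (theta w σ)^2 ≤ 4 * α^2 * L^2 := by
      have h := htheta_le σ
      have h0 := htheta_nonneg σ
      nlinarith [sq_nonneg (theta w σ), sq_nonneg (2 * α * L)]
    have hA : (0:ℝ) ≤ L ^ (-(2*p)) := Real.rpow_nonneg hL.le _
    have hB : (0:ℝ) ≤ L ^ (-2:ℝ) := Real.rpow_nonneg hL.le _
    have hN : (0:ℝ) ≤ ‖F σ‖^2 := sq_nonneg _
    rw [hsplit]
    calc L ^ (-(2*p)) * L ^ (-2:ℝ) * (theta w σ)^2 * ‖F σ‖^2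
        ≤ L ^ (-(2*p)) * L ^ (-2:ℝ) * (4 * α^2 * L^2) * ‖F σ‖^2 := by
          have := mul_le_mul_of_nonneg_left hθ2 (mul_nonneg hA hB)
          exact mul_le_mul_of_nonneg_right this hN
      _ = 4 * α^2 * (L ^ (-(2*p)) * ‖F σ‖^2) * (L ^ (-2:ℝ) * L^2) := by ring
      _ = 4 * α^2 * (L ^ (-(2*p)) * ‖F σ‖^2) := by rw [hinv, mul_one]
  have h4α : (0:ℝ) ≤ 4 * α^2 := by positivity
  constructor
  · calc (∑' σ : Finset ℕ, ENNReal.ofReal (lam σ ^ (-(2*(p+1))) * (theta w σ)^2 * ‖F σ‖^2))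
        ≤ ∑' σ : Finset ℕ, ENNReal.ofReal (4 * α^2 * (lam σ ^ (-(2*p)) * ‖F σ‖^2)) :=
          ENNReal.tsum_le_tsum fun σ => ENNReal.ofReal_le_ofReal (key σ)
      _ = ∑' σ : Finset ℕ, ENNReal.ofReal (4 * α^2) * ENNReal.ofReal (lam σ ^ (-(2*p)) * ‖F σ‖^2) := by
          congr 1; funext σ; exact ENNReal.ofReal_mul h4α
      _ = ENNReal.ofReal (4 * α^2) *
          ∑' σ : Finset ℕ, ENNReal.ofReal (lam σ ^ (-(2*p)) * ‖F σ‖^2) :=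
          ENNReal.tsum_mul_left
  · intro hg
    have hgsum : Summable (fun σ : Finset ℕ => 4 * α^2 * (lam σ ^ (-(2*p)) * ‖F σ‖^2)) :=
      hg.mul_left _
    have hfnonneg : ∀ σ : Finset ℕ,
        0 ≤ lam σ ^ (-(2*(p+1))) * (theta w σ)^2 * ‖F σ‖^2 := fun σ => by
      have := (lam_pos σ).le
      positivity
    have hf : Summable (fun σ : Finset ℕ =>
        lam σ ^ (-(2*(p+1))) * (theta w σ)^2 * ‖F σ‖^2) :=
      Summable.of_nonneg_of_le hfnonneg key hgsum
    refine ⟨hf, ?_⟩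
    have htle : (∑' σ : Finset ℕ, lam σ ^ (-(2*(p+1))) * (theta w σ)^2 * ‖F σ‖^2)
        ≤ 4 * α^2 * ∑' σ : Finset ℕ, lam σ ^ (-(2*p)) * ‖F σ‖^2 := by
      calc (∑' σ : Finset ℕ, lam σ ^ (-(2*(p+1))) * (theta w σ)^2 * ‖F σ‖^2)
          ≤ ∑' σ : Finset ℕ, 4 * α^2 * (lam σ ^ (-(2*p)) * ‖F σ‖^2) :=
            Summable.tsum_le_tsum key hf hgsum
        _ = 4 * α^2 * ∑' σ : Finset ℕ, lam σ ^ (-(2*p)) * ‖F σ‖^2 := tsum_mul_left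
    calc Real.sqrt (∑' σ : Finset ℕ, lam σ ^ (-(2*(p+1))) * (theta w σ)^2 * ‖F σ‖^2)
        ≤ Real.sqrt (4 * α^2 * ∑' σ : Finset ℕ, lam σ ^ (-(2*p)) * ‖F σ‖^2) :=
          Real.sqrt_le_sqrt htle
      _ = Real.sqrt (4 * α^2) * Real.sqrt (∑' σ : Finset ℕ, lam σ ^ (-(2*p)) * ‖F σ‖^2) :=
          Real.sqrt_mul h4α _
      _ = 2 * α * Real.sqrt (∑' σ : Finset ℕ, lam σ ^ (-(2*p)) * ‖F σ‖^2) := by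
          have : (4 : ℝ) * α^2 = (2*α)^2 := by ring
          rw [this, Real.sqrt_sq (by linarith)]
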